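/- Let P₀, P₁ be probability distributions on a finite set, P_λ = (1−λ)P₀ + λP₁, and fix λ̄ ∈ [0,1] with P_{λ̄} strictly positive. Then g(λ) = D_KL(P_λ ‖ P_{λ̄}) satisfies g(λ̄) = 0 and g is nondecreasing on [λ̄, 1]. -/

import Mathlib

open Real Finset

private lemma termConvex (c : ℝ) (hc : 0 < c) :
    ConvexOn ℝ (Set.Ici 0) (fun x : ℝ => x * Real.log (x / c)) := by
  have h1 : ConvexOn ℝ (Set.Ici (0:ℝ)) (fun x => x * Real.log x - Real.log c * x) := by
    refine Real.convexOn_mul_log.sub ?_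
    exact ⟨convex_Ici 0, by
      intro x _ y _ a b _ _ _
      simp only [smul_eq_mul]
      ring_nf
      exact le_refl _⟩
  refine h1.congr ?_
  intro x hx
  rcases eq_or_lt_of_le (Set.mem_Ici.mp hx) with h0 | h0
  · simp [← h0]
  · simp only [Real.log_div (ne_of_gt h0) (ne_of_gt hc)]
    ring

private lemma klNonneg {Y : Type*} [Fintype Y] (q c : Y → ℝ)
    (hq : ∀ y, 0 ≤ q y) (hc : ∀ y, 0 < c y)
    (hqs : ∑ y, q y = 1) (hcs : ∑ y, c y = 1) :
    0 ≤ ∑ y, q y * Real.log (q y / c y) := by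
  have key : ∀ y, q y - c y ≤ q y * Real.log (q y / c y) := by
    intro y
    rcases eq_or_lt_of_le (hq y) with h0 | h0
    · simp [← h0]
      linarith [(hc y).le]
    · have hlog : Real.log (c y / q y) ≤ c y / q y - 1 :=
        Real.log_le_sub_one_of_pos (div_pos (hc y) h0)
      have hrw : Real.log (c y / q y) = - Real.log (q y / c y) := by
        rw [← Real.log_inv, inv_div]
      rw [hrw] at hlog
      have : 1 - c y / q y ≤ Real.log (q y / c y) := by linarith
      have := mul_le_mul_of_nonneg_left this h0.le
      calc q y - c y = q y * (1 - c y / q y) := by field_simp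
        _ ≤ q y * Real.log (q y / c y) := this
  calc (0:ℝ) = ∑ y, (q y - c y) := by rw [Finset.sum_sub_distrib, hqs, hcs]; ring
    _ ≤ ∑ y, q y * Real.log (q y / c y) := Finset.sum_le_sum fun y _ => key y

/-- For pmfs `P₀, P₁` on a finite set, with mixtures `P_λ = (1-λ)P₀ + λP₁` and `λ̄ ∈ [0,1]`
such that `P_{λ̄}` is strictly positive, the map `g(λ) = D_KL(P_λ ‖ P_{λ̄})` satisfies
`g(λ̄) = 0` and `g` is nondecreasing on `[λ̄, 1]`. -/
theorem mixtureKL_zero_and_monotone {Y : Type*} [Fintype Y] (P0 P1 : Y → ℝ)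
    (hP00 : ∀ y, 0 ≤ P0 y) (hP01 : ∑ y, P0 y = 1)
    (hP10 : ∀ y, 0 ≤ P1 y) (hP11 : ∑ y, P1 y = 1)
    (lbar : ℝ) (hlbar : lbar ∈ Set.Icc (0:ℝ) 1)
    (hpos : ∀ y, 0 < (1 - lbar) * P0 y + lbar * P1 y) :
    (∑ y, ((1 - lbar) * P0 y + lbar * P1 y) *
        Real.log (((1 - lbar) * P0 y + lbar * P1 y) / ((1 - lbar) * P0 y + lbar * P1 y))) = 0 ∧
    MonotoneOn
      (fun l : ℝ => ∑ y, ((1 - l) * P0 y + l * P1 y) *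
        Real.log (((1 - l) * P0 y + l * P1 y) / ((1 - lbar) * P0 y + lbar * P1 y)))
      (Set.Icc lbar 1) := by
  obtain ⟨hl0, hl1⟩ := hlbar
  set g : ℝ → ℝ := fun l : ℝ => ∑ y, ((1 - l) * P0 y + l * P1 y) *
        Real.log (((1 - l) * P0 y + l * P1 y) / ((1 - lbar) * P0 y + lbar * P1 y)) with hg
  -- mixture nonneg on [0,1]
  have hmixnn : ∀ l ∈ Set.Icc (0:ℝ) 1, ∀ y, 0 ≤ (1 - l) * P0 y + l * P1 y := by
    intro l hl y
    have := hP00 y; have := hP10 y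
    nlinarith [hl.1, hl.2]
  have hmixsum : ∀ l : ℝ, ∑ y, ((1 - l) * P0 y + l * P1 y) = 1 := by
    intro l
    simp [Finset.sum_add_distrib, ← Finset.mul_sum, hP01, hP11]
  have hcsum : ∑ y, ((1 - lbar) * P0 y + lbar * P1 y) = 1 := hmixsum lbar
  -- g is convex on [0,1]
  have hconv : ConvexOn ℝ (Set.Icc (0:ℝ) 1) g := by
    have hterm : ∀ y : Y, ConvexOn ℝ (Set.Icc (0:ℝ) 1)
        (fun l : ℝ => ((1 - l) * P0 y + l * P1 y) *
          Real.log (((1 - l) * P0 y + l * P1 y) / ((1 - lbar) * P0 y + lbar * P1 y))) := by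
      intro y
      have h1 := (termConvex _ (hpos y)).comp_affineMap
        (AffineMap.lineMap (P0 y) (P1 y) : ℝ →ᵃ[ℝ] ℝ)
      have hsub : Set.Icc (0:ℝ) 1 ⊆ (AffineMap.lineMap (P0 y) (P1 y) : ℝ →ᵃ[ℝ] ℝ) ⁻¹' Set.Ici 0 := by
        intro l hl
        simp only [Set.mem_preimage, AffineMap.lineMap_apply_module, Set.mem_Ici,
          smul_eq_mul]
        have := hmixnn l hl y
        nlinarith
      refine ((h1.subset hsub (convex_Icc 0 1)).congr ?_)
      intro l _
      simp only [Function.comp_apply, AffineMap.lineMap_apply_module, smul_eq_mul]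
    -- sum of convex functions
    have : ∀ (s : Finset Y), ConvexOn ℝ (Set.Icc (0:ℝ) 1)
        (fun l : ℝ => ∑ y ∈ s, ((1 - l) * P0 y + l * P1 y) *
          Real.log (((1 - l) * P0 y + l * P1 y) / ((1 - lbar) * P0 y + lbar * P1 y))) := by
      classical
      intro s
      induction s using Finset.induction with
      | empty => simpa using convexOn_const (0:ℝ) (convex_Icc (0:ℝ) 1)
      | insert _ _ hnot ih =>
        simp only [Finset.sum_insert hnot]
        exact (hterm _).add ih
    exact this Finset.univ
  -- g(lbar) = 0
  have hgzero : g lbar = 0 := by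
    rw [hg]
    apply Finset.sum_eq_zero
    intro y _
    rw [div_self (ne_of_gt (hpos y)), Real.log_one, mul_zero]
  -- g ≥ 0 on [0,1]
  have hgnn : ∀ l ∈ Set.Icc (0:ℝ) 1, 0 ≤ g l := by
    intro l hl
    exact klNonneg _ _ (hmixnn l hl) hpos (hmixsum l) hcsum
  constructor
  · exact hgzero
  · intro a ha b hb hab
    have hIcc : Set.Icc lbar 1 ⊆ Set.Icc (0:ℝ) 1 := Set.Icc_subset_Icc hl0 le_rfl
    rcases eq_or_lt_of_le hab with rfl | hab'
    · exact le_refl _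
    have hbl : lbar < b := lt_of_le_of_lt ha.1 hab'
    set t : ℝ := (a - lbar) / (b - lbar) with ht
    have hbl' : 0 < b - lbar := by linarith
    have ht0 : 0 ≤ t := div_nonneg (by linarith [ha.1]) hbl'.le
    have ht1 : t ≤ 1 := by
      rw [div_le_one hbl']; linarith
    have hcomb : (1 - t) * lbar + t * b = a := by
      field_simp [ht]
      have h' : t * (b - lbar) = a - lbar := by rw [ht]; exact div_mul_cancel₀ _ hbl'.ne'
      linarith
    have hkey := hconv.2 (hIcc ⟨le_rfl, hl1⟩) (hIcc hb) (by linarith : (0:ℝ) ≤ 1 - t) ht0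
      (by ring : (1 - t) + t = 1)
    simp only [smul_eq_mul, hcomb, hgzero, mul_zero, zero_add] at hkey
    calc g a ≤ t * g b := hkey
      _ ≤ 1 * g b := mul_le_mul_of_nonneg_right ht1 (hgnn b (hIcc hb))
      _ = g b := one_mul _
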